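/- Let λ = (1, ζ, ζ², −2, 3) with ζ a primitive third root of unity. The six vectors (0,0,0,3,2), (0,1,1,1,1), (0,3,3,0,1), (1,0,0,2,1), (1,1,1,0,0), (2,0,0,1,0) all belong to M_λ = { α ∈ ℕ⁵ : ⟨λ,α⟩ = 0 }, and each of them is irreducible in M_λ, i.e., cannot be written as a sum of two nonzero elements of M_λ. -/

import Mathlib

private lemma stmt13_zero_of (a : Fin 5 → ℕ)
    (h : a 0 = 0 ∧ a 1 = 0 ∧ a 2 = 0 ∧ a 3 = 0 ∧ a 4 = 0) : a = 0 := by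
  funext i
  fin_cases i <;> simp [h.1, h.2.1, h.2.2.1, h.2.2.2.1, h.2.2.2.2]

/-- For `λ = (1, ζ, ζ², −2, 3)` with `ζ` a primitive third root of unity, the
six listed vectors belong to `M_λ = {α ∈ ℕ⁵ : ⟨λ,α⟩ = 0}` and each is
irreducible in `M_λ` (not a sum of two nonzero elements of `M_λ`). -/
theorem stmt13 (ζ : ℂ) (hζ : IsPrimitiveRoot ζ 3)
    (lam : Fin 5 → ℂ) (hlam : lam = ![1, ζ, ζ^2, -2, 3])
    (M : Set (Fin 5 → ℕ))
    (hM : M = {α | ∑ i : Fin 5, lam i * (α i : ℂ) = 0}) :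
    ∀ v ∈ ([![0,0,0,3,2], ![0,1,1,1,1], ![0,3,3,0,1],
             ![1,0,0,2,1], ![1,1,1,0,0], ![2,0,0,1,0]] : List (Fin 5 → ℕ)),
      v ∈ M ∧ v ≠ 0 ∧
        ∀ a ∈ M, ∀ b ∈ M, v = a + b → a = 0 ∨ b = 0 := by
  have hζ3 : ζ ^ 3 = 1 := hζ.pow_eq_one
  have hζ1 : ζ ≠ 1 := hζ.ne_one (by norm_num)
  have hq : ζ ^ 2 + ζ + 1 = 0 := by
    have h : (ζ - 1) * (ζ ^ 2 + ζ + 1) = 0 := by linear_combination hζ3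
    rcases mul_eq_zero.mp h with h1 | h2
    · exact absurd (sub_eq_zero.mp h1) hζ1
    · exact h2
  have him : ζ.im ≠ 0 := by
    intro h0
    have hre := congrArg Complex.re hq
    simp [Complex.add_re, pow_two, Complex.mul_re, h0] at hre
    nlinarith [hre]
  -- membership in M implies two linear equations
  have key : ∀ a : Fin 5 → ℕ, a ∈ M →
      a 0 + 3 * a 4 = a 2 + 2 * a 3 ∧ a 1 = a 2 := by
    intro a ha
    rw [hM] at ha
    simp only [Set.mem_setOf_eq, hlam, Fin.sum_univ_five, Matrix.cons_val_zero,
      Matrix.cons_val_one, Matrix.head_cons, Matrix.cons_val_two, Matrix.tail_cons,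
      Matrix.cons_val_three, Matrix.cons_val_four] at ha
    have hAB : (((a 0 : ℤ) - a 2 - 2 * a 3 + 3 * a 4 : ℤ) : ℂ)
        + (((a 1 : ℤ) - a 2 : ℤ) : ℂ) * ζ = 0 := by
      push_cast
      linear_combination ha - (a 2 : ℂ) * hq
    have hBim := congrArg Complex.im hAB
    simp [Complex.add_im, Complex.mul_im] at hBim
    have hB0 : ((a 1 : ℤ) - a 2 : ℤ) = 0 := by
      rcases hBim with h | h
      · exact_mod_cast h
      · exact absurd h him
    have hBc : (a 1 : ℂ) = a 2 := by
      have h : (a 1 : ℤ) = a 2 := by omega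
      exact_mod_cast h
    have hAc : (a 0 : ℂ) + 3 * a 4 = a 2 + 2 * a 3 := by
      push_cast at hAB
      linear_combination hAB - ζ * hBc
    have hAn : a 0 + 3 * a 4 = a 2 + 2 * a 3 := by exact_mod_cast hAc
    exact ⟨hAn, by omega⟩
  -- converse: the two linear equations give membership
  have mem' : ∀ w : Fin 5 → ℕ, w 0 + 3 * w 4 = w 2 + 2 * w 3 → w 1 = w 2 → w ∈ M := by
    intro w h1 h2
    rw [hM]
    simp only [Set.mem_setOf_eq, hlam, Fin.sum_univ_five, Matrix.cons_val_zero,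
      Matrix.cons_val_one, Matrix.head_cons, Matrix.cons_val_two, Matrix.tail_cons,
      Matrix.cons_val_three, Matrix.cons_val_four]
    have hc1 : (w 0 : ℂ) + 3 * w 4 = (w 2 : ℂ) + 2 * w 3 := by exact_mod_cast congrArg (Nat.cast : ℕ → ℂ) h1
    have hc2 : (w 1 : ℂ) = w 2 := by exact_mod_cast congrArg (Nat.cast : ℕ → ℂ) h2
    linear_combination hc1 + ζ * hc2 + (w 2 : ℂ) * hq
  intro v hv
  simp only [List.mem_cons, List.not_mem_nil, or_false] at hv
  rcases hv with rfl | rfl | rfl | rfl | rfl | rfl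
  all_goals {
    refine ⟨mem' _ (by decide) (by decide), ?_, ?_⟩
    · intro h
      have h0 := congrFun h 0
      have h3 := congrFun h 3
      have h4 := congrFun h 4
      simp only [Pi.zero_apply, Matrix.cons_val_zero, Matrix.cons_val_one,
        Matrix.head_cons, Matrix.cons_val_two, Matrix.tail_cons,
        Matrix.cons_val_three, Matrix.cons_val_four] at h0 h3 h4
      omega
    · intro a ha b hb hab
      obtain ⟨ha1, ha2⟩ := key a ha
      obtain ⟨hb1, hb2⟩ := key b hb
      have e0 := congrFun hab 0
      have e1 := congrFun hab 1
      have e2 := congrFun hab 2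
      have e3 := congrFun hab 3
      have e4 := congrFun hab 4
      simp only [Pi.add_apply, Matrix.cons_val_zero, Matrix.cons_val_one,
        Matrix.head_cons, Matrix.cons_val_two, Matrix.tail_cons,
        Matrix.cons_val_three, Matrix.cons_val_four] at e0 e1 e2 e3 e4
      have h : (a 0 = 0 ∧ a 1 = 0 ∧ a 2 = 0 ∧ a 3 = 0 ∧ a 4 = 0) ∨
             (b 0 = 0 ∧ b 1 = 0 ∧ b 2 = 0 ∧ b 3 = 0 ∧ b 4 = 0) := by
        have h3 : a 3 ≤ 3 := by omega
        have h4 : a 4 ≤ 3 := by omega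
        interval_cases h : (a 3) <;> interval_cases h' : (a 4) <;> omega
      rcases h with h | h
      · exact Or.inl (stmt13_zero_of a h)
      · exact Or.inr (stmt13_zero_of b h)
  }
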